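/- (Pointwise vanishing of the optimal L² Stein critic.) Fix μ₁ ∈ ℝ, σ > 0, π ∈ (0,1) and x ∈ ℝ. Let q(x) = φ_{μ₁,σ}(x) and p_{μ₂}(x) = π φ_{μ₁,σ}(x) + (1−π) φ_{μ₂,σ}(x). Then q(x)·s_{p_{μ₂}}(x) − q'(x) → 0 as μ₂ → +∞, where q' denotes the derivative of q. -/

import Mathlib

open MeasureTheory Filter

/-- Gaussian density with mean `μ` and standard deviation `σ`. -/
noncomputable def gaussian (μ σ : ℝ) (x : ℝ) : ℝ :=
  (σ * Real.sqrt (2 * Real.pi))⁻¹ * Real.exp (-(x - μ) ^ 2 / (2 * σ ^ 2))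

/-- The score of a density `ρ`: the derivative of its log. -/
noncomputable def score (ρ : ℝ → ℝ) (x : ℝ) : ℝ :=
  deriv (fun y => Real.log (ρ y)) x

/-- Fisher divergence between densities `q` and `p`. -/
noncomputable def fisherDiv (q p : ℝ → ℝ) : ℝ :=
  ∫ x : ℝ, q x * (score q x - score p x) ^ 2

lemma gaussian_pos (μ σ : ℝ) (hσ : 0 < σ) (x : ℝ) : 0 < gaussian μ σ x := by
  unfold gaussian
  have h : 0 < Real.sqrt (2 * Real.pi) := Real.sqrt_pos.2 (by positivity)
  positivity

lemma hasDerivAt_gaussian (μ σ : ℝ) (hσ : 0 < σ) (y : ℝ) :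
    HasDerivAt (gaussian μ σ) (gaussian μ σ y * (-(y - μ) / σ ^ 2)) y := by
  have h1 : HasDerivAt (fun y : ℝ => -(y - μ) ^ 2 / (2 * σ ^ 2)) (-(y - μ) / σ ^ 2) y := by
    have h0 : HasDerivAt (fun y : ℝ => y - μ) 1 y := (hasDerivAt_id y).sub_const μ
    have h2 := ((h0.pow 2).neg).div_const (2 * σ ^ 2)
    convert h2 using 1
    · rfl
    · rfl
    · rfl
    field_simp
    ring
  have h3 := (h1.exp).const_mul ((σ * Real.sqrt (2 * Real.pi))⁻¹)
  have : gaussian μ σ = fun y =>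
      (σ * Real.sqrt (2 * Real.pi))⁻¹ * Real.exp (-(y - μ) ^ 2 / (2 * σ ^ 2)) := rfl
  rw [this]
  convert h3 using 1
  · rfl
  · rfl
  ring

lemma aux_mul_exp (c : ℝ) (hc : 0 < c) :
    Tendsto (fun u : ℝ => u * Real.exp (-(u ^ 2) / c)) atTop (nhds 0) := by
  have h1 : Tendsto (fun s : ℝ => s * Real.exp (-s)) atTop (nhds 0) := by
    simpa using Real.tendsto_pow_mul_exp_neg_atTop_nhds_zero 1
  have h2 : Tendsto (fun u : ℝ => u ^ 2 / c) atTop atTop :=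
    (tendsto_pow_atTop two_ne_zero).atTop_div_const hc
  have h3 : Tendsto (fun u : ℝ => u ^ 2 / c * Real.exp (-(u ^ 2 / c))) atTop (nhds 0) :=
    h1.comp h2
  have h4 : Tendsto (fun u : ℝ => c / u) atTop (nhds 0) := by
    simpa [div_eq_mul_inv] using tendsto_inv_atTop_zero.const_mul c
  have h5 := h3.mul h4
  rw [mul_zero] at h5
  refine h5.congr' ?_
  filter_upwards [eventually_gt_atTop (0 : ℝ)] with u hu
  have hu' : u ≠ 0 := ne_of_gt hu
  field_simp

/-- pointwise vanishing of the optimal `L²` Stein critic: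
`q(x)·s_{p_{μ₂}}(x) − q'(x) → 0` as `μ₂ → +∞`. -/
theorem optimal_L2_critic_pointwise_vanishing (μ₁ σ w : ℝ) (hσ : 0 < σ)
    (hw : w ∈ Set.Ioo (0 : ℝ) 1) (x : ℝ) :
    Tendsto
      (fun μ₂ => gaussian μ₁ σ x *
          score (fun y => w * gaussian μ₁ σ y + (1 - w) * gaussian μ₂ σ y) x
        - deriv (gaussian μ₁ σ) x)
      atTop (nhds 0) := by
  obtain ⟨hw0, hw1⟩ := hw
  set q := gaussian μ₁ σ x with hq
  have hqpos : 0 < q := gaussian_pos μ₁ σ hσ x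
  set D1 : ℝ := q * (-(x - μ₁) / σ ^ 2) with hD1
  have hderiv1 : deriv (gaussian μ₁ σ) x = D1 := (hasDerivAt_gaussian μ₁ σ hσ x).deriv
  set A : ℝ → ℝ := fun μ₂ => gaussian μ₂ σ x with hA
  set B : ℝ → ℝ := fun μ₂ => gaussian μ₂ σ x * (-(x - μ₂) / σ ^ 2) with hB
  have hscore : ∀ μ₂ : ℝ,
      score (fun y => w * gaussian μ₁ σ y + (1 - w) * gaussian μ₂ σ y) x
        = (w * D1 + (1 - w) * B μ₂) / (w * q + (1 - w) * A μ₂) := by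
    intro μ₂
    have hp : HasDerivAt (fun y => w * gaussian μ₁ σ y + (1 - w) * gaussian μ₂ σ y)
        (w * D1 + (1 - w) * B μ₂) x :=
      (((hasDerivAt_gaussian μ₁ σ hσ x).const_mul w).add
        ((hasDerivAt_gaussian μ₂ σ hσ x).const_mul (1 - w)))
    have hpx : w * q + (1 - w) * A μ₂ ≠ 0 := by
      have : 0 < w * q + (1 - w) * A μ₂ := by
        have := gaussian_pos μ₂ σ hσ x
        have h1w : 0 < 1 - w := by linarith
        positivity
      exact ne_of_gt this
    exact (hp.log hpx).deriv
  have hAlim : Tendsto A atTop (nhds 0) := by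
    have hexp : Tendsto (fun μ₂ : ℝ => -(x - μ₂) ^ 2 / (2 * σ ^ 2)) atTop atBot := by
      apply Tendsto.atBot_div_const (by positivity)
      apply tendsto_neg_atBot_iff.2
      have : Tendsto (fun μ₂ : ℝ => (x - μ₂) ^ 2) atTop atTop := by
        have h : Tendsto (fun μ₂ : ℝ => μ₂ - x) atTop atTop :=
          tendsto_atTop_add_const_right _ (-x) tendsto_id
        have := (tendsto_pow_atTop two_ne_zero).comp h
        refine this.congr fun μ₂ => ?_
        simp only [Function.comp]
        ring
      exact this
    have := (Real.tendsto_exp_atBot.comp hexp).const_mul ((σ * Real.sqrt (2 * Real.pi))⁻¹)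
    rw [mul_zero] at this
    exact this
  have hBlim : Tendsto B atTop (nhds 0) := by
    have key := aux_mul_exp (2 * σ ^ 2) (by positivity)
    have hcomp : Tendsto (fun μ₂ : ℝ => (μ₂ - x) * Real.exp (-((μ₂ - x) ^ 2) / (2 * σ ^ 2)))
        atTop (nhds 0) :=
      key.comp (tendsto_atTop_add_const_right _ (-x) tendsto_id)
    have := hcomp.const_mul ((σ * Real.sqrt (2 * Real.pi))⁻¹ / σ ^ 2)
    rw [mul_zero] at this
    refine this.congr fun μ₂ => ?_
    simp only [hB]
    unfold gaussian
    have : -(x - μ₂) ^ 2 = -((μ₂ - x) ^ 2) := by ring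
    rw [this]
    ring
  have hfun : ∀ μ₂ : ℝ,
      (gaussian μ₁ σ x *
          score (fun y => w * gaussian μ₁ σ y + (1 - w) * gaussian μ₂ σ y) x
        - deriv (gaussian μ₁ σ) x)
      = q * ((w * D1 + (1 - w) * B μ₂) / (w * q + (1 - w) * A μ₂)) - D1 := by
    intro μ₂
    rw [hscore μ₂, hderiv1]
  have hlim : Tendsto (fun μ₂ => q * ((w * D1 + (1 - w) * B μ₂) / (w * q + (1 - w) * A μ₂)) - D1)
      atTop (nhds (q * ((w * D1 + (1 - w) * 0) / (w * q + (1 - w) * 0)) - D1)) := by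
    refine Tendsto.sub ?_ tendsto_const_nhds
    refine Tendsto.const_mul q ?_
    refine Tendsto.div (Tendsto.const_add _ (hBlim.const_mul (1 - w)))
      (Tendsto.const_add _ (hAlim.const_mul (1 - w))) ?_
    have h : w * q + (1 - w) * 0 = w * q := by ring
    rw [h]
    exact (by positivity : (0:ℝ) < w * q).ne'
  have hval : q * ((w * D1 + (1 - w) * 0) / (w * q + (1 - w) * 0)) - D1 = 0 := by
    field_simp
    ring
  rw [funext hfun]
  rw [hval] at hlim
  exact hlim
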